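/- Let H be a Hilbert space, P : H → K Gâteaux differentiable with derivative A = dP strongly monotone (constant α) and Lipschitz continuous (constant L), F ∈ H', and E := Re(P − F). Let X ⊆ H be a closed subspace and u_X ∈ X the Galerkin solution of ⟨Au_X, v⟩ = ⟨F, v⟩ for all v ∈ X. Then (α/2)‖u_X − v‖² ≤ E(v) − E(u_X) ≤ (L/2)‖u_X − v‖² for all v ∈ X. In particular, u_X is the unique minimizer of E over X. -/

import Mathlib

private lemma aux_mono_01 {f f' : ℝ → ℝ} (hderiv : ∀ t, HasDerivAt f (f' t) t)
    (hpos : ∀ t ∈ Set.Ioo (0:ℝ) 1, 0 ≤ f' t) : f 0 ≤ f 1 := by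
  have hmono := monotoneOn_of_deriv_nonneg (convex_Icc (0:ℝ) 1)
    (fun t _ => (hderiv t).continuousAt.continuousWithinAt)
    (fun t _ => (hderiv t).differentiableAt.differentiableWithinAt)
    (fun t ht => by
      rw [interior_Icc] at ht
      rw [(hderiv t).deriv]
      exact hpos t ht)
  exact hmono (Set.left_mem_Icc.2 zero_le_one) (Set.right_mem_Icc.2 zero_le_one) zero_le_one

/-- Energy equivalence for the Galerkin solution of a strongly monotone,
Lipschitz continuous potential operator, and uniqueness of the energy minimizer. -/
theorem energy_equivalence_and_unique_minimizer
    {H : Type*} [NormedAddCommGroup H] [InnerProductSpace ℝ H] [CompleteSpace H]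
    (P : H → ℝ) (A : H → (H →L[ℝ] ℝ)) (F : H →L[ℝ] ℝ)
    (hGateaux : ∀ w v : H, HasDerivAt (fun t : ℝ => P (w + t • v)) (A w v) 0)
    (α L : ℝ) (hα : 0 < α) (hαL : α ≤ L)
    (hmono : ∀ v w : H, α * ‖w - v‖ ^ 2 ≤ (A w - A v) (w - v))
    (hlip : ∀ v w : H, ‖A w - A v‖ ≤ L * ‖w - v‖)
    (X : Submodule ℝ H) (hX : IsClosed (X : Set H))
    (uX : H) (huXmem : uX ∈ X) (huX : ∀ v ∈ X, A uX v = F v)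
    (E : H → ℝ) (hE : ∀ v, E v = P v - F v) :
    (∀ v ∈ X, α / 2 * ‖uX - v‖ ^ 2 ≤ E v - E uX ∧
      E v - E uX ≤ L / 2 * ‖uX - v‖ ^ 2) ∧
    (∀ v ∈ X, E uX ≤ E v) ∧
    (∀ w ∈ X, (∀ v ∈ X, E w ≤ E v) → w = uX) := by
  -- the main two-sided estimate
  have main : ∀ v ∈ X, α / 2 * ‖uX - v‖ ^ 2 ≤ E v - E uX ∧
      E v - E uX ≤ L / 2 * ‖uX - v‖ ^ 2 := by
    intro v hv
    set d : H := v - uX with hd_def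
    have hdX : d ∈ X := X.sub_mem hv huXmem
    have hFd : F d = A uX d := (huX d hdX).symm
    -- derivative of t ↦ P (uX + t • d)
    have hg : ∀ t₀ : ℝ, HasDerivAt (fun t : ℝ => P (uX + t • d)) (A (uX + t₀ • d) d) t₀ := by
      intro t₀
      have h1 := hGateaux (uX + t₀ • d) d
      have h2 : HasDerivAt (fun t : ℝ => t - t₀) 1 t₀ := (hasDerivAt_id t₀).sub_const t₀
      have h3 : HasDerivAt ((fun s : ℝ => P (uX + t₀ • d + s • d)) ∘ (fun t : ℝ => t - t₀))
          (A (uX + t₀ • d) d * 1) t₀ := by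
        apply HasDerivAt.comp
        · simpa using h1
        · exact h2
      have heq : ((fun s : ℝ => P (uX + t₀ • d + s • d)) ∘ (fun t : ℝ => t - t₀))
          = fun t : ℝ => P (uX + t • d) := by
        funext t
        simp only [Function.comp]
        congr 1
        rw [add_assoc, ← add_smul]
        ring_nf
      rw [heq] at h3
      simpa using h3
    -- derivative of t ↦ F (uX + t • d)
    have hFder : ∀ t₀ : ℝ, HasDerivAt (fun t : ℝ => F (uX + t • d)) (F d) t₀ := by
      intro t₀
      have heq : (fun t : ℝ => F (uX + t • d)) = fun t : ℝ => F uX + t * F d := by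
        funext t; simp [map_add, map_smul, smul_eq_mul]
      rw [heq]
      simpa using ((hasDerivAt_id t₀).mul_const (F d)).const_add (F uX)
    -- derivative of the energy along the segment
    have hf : ∀ t₀ : ℝ, HasDerivAt (fun t : ℝ => E (uX + t • d))
        (A (uX + t₀ • d) d - A uX d) t₀ := by
      intro t₀
      have heq : (fun t : ℝ => E (uX + t • d))
          = fun t : ℝ => P (uX + t • d) - F (uX + t • d) := by
        funext t; rw [hE]
      rw [heq]
      have := (hg t₀).sub (hFder t₀)
      rwa [hFd] at this
    -- pointwise derivative bounds for 0 < t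
    have hlow : ∀ t : ℝ, 0 < t → α * t * ‖d‖ ^ 2 ≤ A (uX + t • d) d - A uX d := by
      intro t ht
      have hm := hmono uX (uX + t • d)
      have h1 : uX + t • d - uX = t • d := by abel
      rw [h1] at hm
      have h2 : (A (uX + t • d) - A uX) (t • d) = t * (A (uX + t • d) d - A uX d) := by
        simp [ContinuousLinearMap.sub_apply, map_smul, mul_sub]
      have h3 : ‖t • d‖ ^ 2 = t ^ 2 * ‖d‖ ^ 2 := by
        rw [norm_smul, Real.norm_eq_abs, mul_pow, sq_abs]
      rw [h2, h3] at hm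
      nlinarith
    have hhigh : ∀ t : ℝ, 0 < t → A (uX + t • d) d - A uX d ≤ L * t * ‖d‖ ^ 2 := by
      intro t ht
      have hl := hlip uX (uX + t • d)
      have h1 : uX + t • d - uX = t • d := by abel
      rw [h1, norm_smul, Real.norm_eq_abs, abs_of_pos ht] at hl
      have h2 : A (uX + t • d) d - A uX d ≤ ‖A (uX + t • d) - A uX‖ * ‖d‖ := by
        have := (A (uX + t • d) - A uX).le_opNorm d
        have habs : A (uX + t • d) d - A uX d ≤ ‖(A (uX + t • d) - A uX) d‖ := by
          rw [Real.norm_eq_abs]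
          exact (le_abs_self _).trans_eq (by simp [ContinuousLinearMap.sub_apply])
        exact habs.trans this
      have hnd : 0 ≤ ‖d‖ := norm_nonneg d
      nlinarith
    -- lower bound via monotone auxiliary function
    have hlower : α / 2 * ‖d‖ ^ 2 ≤ E v - E uX := by
      have hψ : ∀ t : ℝ, HasDerivAt (fun t : ℝ => E (uX + t • d) - α / 2 * t ^ 2 * ‖d‖ ^ 2)
          ((A (uX + t • d) d - A uX d) - α * t * ‖d‖ ^ 2) t := by
        intro t
        have hq : HasDerivAt (fun t : ℝ => α / 2 * t ^ 2 * ‖d‖ ^ 2) (α * t * ‖d‖ ^ 2) t := by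
          have h := ((hasDerivAt_pow 2 t).const_mul (α / 2)).mul_const (‖d‖ ^ 2)
          refine h.congr_deriv ?_
          ring
        exact (hf t).sub hq
      have := aux_mono_01 hψ (fun t ht => by
        have := hlow t ht.1
        linarith)
      simp only [zero_smul, add_zero, one_smul] at this
      have hv1 : uX + d = v := by rw [hd_def]; abel
      rw [hv1] at this
      nlinarith [this]
    -- upper bound
    have hupper : E v - E uX ≤ L / 2 * ‖d‖ ^ 2 := by
      have hχ : ∀ t : ℝ, HasDerivAt (fun t : ℝ => L / 2 * t ^ 2 * ‖d‖ ^ 2 - E (uX + t • d))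
          (L * t * ‖d‖ ^ 2 - (A (uX + t • d) d - A uX d)) t := by
        intro t
        have hq : HasDerivAt (fun t : ℝ => L / 2 * t ^ 2 * ‖d‖ ^ 2) (L * t * ‖d‖ ^ 2) t := by
          have h := ((hasDerivAt_pow 2 t).const_mul (L / 2)).mul_const (‖d‖ ^ 2)
          refine h.congr_deriv ?_
          ring
        exact hq.sub (hf t)
      have := aux_mono_01 hχ (fun t ht => by
        have := hhigh t ht.1
        linarith)
      simp only [zero_smul, add_zero, one_smul] at this
      have hv1 : uX + d = v := by rw [hd_def]; abel
      rw [hv1] at this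
      nlinarith [this]
    have hnorm : ‖uX - v‖ = ‖d‖ := by rw [hd_def, norm_sub_rev]
    rw [hnorm]
    exact ⟨hlower, hupper⟩
  refine ⟨main, ?_, ?_⟩
  · intro v hv
    have := (main v hv).1
    nlinarith [sq_nonneg ‖uX - v‖, norm_nonneg (uX - v)]
  · intro w hw hmin
    have h1 := (main w hw).1
    have h2 := hmin uX huXmem
    have h3 : ‖uX - w‖ ^ 2 ≤ 0 := by nlinarith
    have h4 : ‖uX - w‖ = 0 := by nlinarith [sq_nonneg ‖uX - w‖, norm_nonneg (uX - w)]
    have := norm_eq_zero.mp h4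
    have : uX = w := by rwa [sub_eq_zero] at this
    exact this.symm
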